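/- arXiv:2404.16735 — 2 statements merged into one kernel-verified Lean document; each statement's English description precedes it below -/
import Mathlib

section
/- Let x_{2n,1}(α) denote the first (smallest) positive zero of the Jacobi polynomial P_{2n}^{(α,α)}. Then for all integers n ≥ 3 and all real α ≥ −1/2, x_{2n,1}(α) ≥ π/(4·√((α + 1/2 + n)(n + 2))). -/
/-- Recurrence coefficient `a_n(α)` for Jacobi polynomials with equal parameters. -/
noncomputable def jacobiA (α : ℝ) (n : ℕ) : ℝ :=
  ((n : ℝ) + 1) * ((n : ℝ) + 2 * α + 1) / ((2 * (n : ℝ) + 2 * α + 1) * ((n : ℝ) + α + 1))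

/-- Recurrence coefficient `g_n(α)` for Jacobi polynomials with equal parameters. -/
noncomputable def jacobiG (α : ℝ) (n : ℕ) : ℝ :=
  ((n : ℝ) + α) / (2 * (n : ℝ) + 2 * α + 1)

/-- The Jacobi polynomial `P_n^{(α,α)}`, defined via the standard three-term recurrence
with initial conditions `P_0 = 1` and `P_1(x) = (α+1)x`. -/
noncomputable def jacobiP (α : ℝ) : ℕ → ℝ → ℝ
  | 0 => fun _ => 1
  | 1 => fun x => (α + 1) * x
  | (n + 2) => fun x =>
      (x * jacobiP α (n + 1) x - jacobiG α (n + 1) * jacobiP α n x) / jacobiA α (n + 1)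

open Real Polynomial Filter Set

set_option maxHeartbeats 2000000

lemma C_pos_ne (r : ℝ) (hr : 0 < r) : (C r : Polynomial ℝ) ≠ 0 := Polynomial.C_ne_zero.mpr hr.ne'

noncomputable def Jpoly (α : ℝ) : ℕ → Polynomial ℝ
  | 0 => 1
  | 1 => C (α + 1) * X
  | (n + 2) => C (jacobiA α (n + 1))⁻¹ *
      (X * Jpoly α (n + 1) - C (jacobiG α (n + 1)) * Jpoly α n)

section Poly
variable (α : ℝ) (hα : -1/2 ≤ α)

include hα

lemma jacobiA_pos (m : ℕ) : 0 < jacobiA α (m + 1) := by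
  have h0 : (0:ℝ) ≤ (m:ℝ) := Nat.cast_nonneg m
  have h1 : (0:ℝ) < ((m+1:ℕ):ℝ) + 2*α + 1 := by push_cast; nlinarith
  have h2 : (0:ℝ) < 2*((m+1:ℕ):ℝ) + 2*α + 1 := by push_cast; nlinarith
  have h3 : (0:ℝ) < ((m+1:ℕ):ℝ) + α + 1 := by push_cast; nlinarith
  have h4 : (0:ℝ) < ((m+1:ℕ):ℝ) + 1 := by positivity
  unfold jacobiA
  positivity

lemma jacobiG_pos (m : ℕ) : 0 < jacobiG α (m + 1) := by
  have h0 : (0:ℝ) ≤ (m:ℝ) := Nat.cast_nonneg m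
  have h1 : (0:ℝ) < ((m+1:ℕ):ℝ) + α := by push_cast; nlinarith
  have h2 : (0:ℝ) < 2*((m+1:ℕ):ℝ) + 2*α + 1 := by push_cast; nlinarith
  unfold jacobiG
  positivity

omit hα in
lemma jacobiP_eval (m : ℕ) (x : ℝ) : jacobiP α m x = (Jpoly α m).eval x := by
  induction m using Nat.twoStepInduction with
  | zero => simp [jacobiP, Jpoly]
  | one => simp [jacobiP, Jpoly]
  | more k ih1 ih2 =>
      simp only [jacobiP, Jpoly, ih1, ih2]
      simp [div_eq_inv_mul, mul_comm]

lemma Jrec (m : ℕ) : C (jacobiA α (m+1)) * Jpoly α (m+2)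
    = X * Jpoly α (m+1) - C (jacobiG α (m+1)) * Jpoly α m := by
  have ha := (jacobiA_pos α hα m).ne'
  show C (jacobiA α (m+1)) * (C (jacobiA α (m+1))⁻¹ * _) = _
  rw [← mul_assoc, ← C_mul, mul_inv_cancel₀ ha, C_1, one_mul]

lemma jacobiA_num (m : ℕ) :
    jacobiA α (m+1) * ((2*(m:ℝ)+2*α+3) * ((m:ℝ)+α+2)) = ((m:ℝ)+2) * ((m:ℝ)+2*α+2) := by
  have h0 : (0:ℝ) ≤ (m:ℝ) := Nat.cast_nonneg m
  have h2 : (0:ℝ) < 2*(m:ℝ)+2*α+3 := by nlinarith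
  have h3 : (0:ℝ) < (m:ℝ)+α+2 := by nlinarith
  have hden : ((2*((m:ℝ)+1)+2*α+1) * (((m:ℝ)+1)+α+1)) ≠ 0 := by
    have : (0:ℝ) < 2*((m:ℝ)+1)+2*α+1 := by nlinarith
    have : (0:ℝ) < ((m:ℝ)+1)+α+1 := by nlinarith
    positivity
  unfold jacobiA
  push_cast
  rw [div_mul_eq_mul_div, div_eq_iff hden]
  ring

lemma jacobiG_num (m : ℕ) :
    jacobiG α (m+1) * (2*(m:ℝ)+2*α+3) = (m:ℝ)+1+α := by
  have h0 : (0:ℝ) ≤ (m:ℝ) := Nat.cast_nonneg m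
  have h2 : (0:ℝ) < 2*(m:ℝ)+2*α+3 := by nlinarith
  have hden : (2*((m:ℝ)+1)+2*α+1) ≠ 0 := by nlinarith
  unfold jacobiG
  push_cast
  rw [div_mul_eq_mul_div, div_eq_iff hden]
  ring

lemma JrecN (m : ℕ) :
    C (((m:ℝ)+2) * ((m:ℝ)+2*α+2)) * Jpoly α (m+2)
      = C ((2*(m:ℝ)+2*α+3) * ((m:ℝ)+α+2)) * (X * Jpoly α (m+1))
        - C (((m:ℝ)+1+α) * ((m:ℝ)+2+α)) * Jpoly α m := by
  have h1 : C (((m:ℝ)+2) * ((m:ℝ)+2*α+2)) =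
      C ((2*(m:ℝ)+2*α+3) * ((m:ℝ)+α+2)) * C (jacobiA α (m+1)) := by
    rw [← C_mul]
    congr 1
    rw [← jacobiA_num α hα m]; ring
  have h2 : C ((2*(m:ℝ)+2*α+3) * ((m:ℝ)+α+2)) * C (jacobiG α (m+1))
      = C (((m:ℝ)+1+α) * ((m:ℝ)+2+α)) := by
    rw [← C_mul]
    congr 1
    rw [← jacobiG_num α hα m]; ring
  rw [h1, mul_assoc, Jrec α hα m, mul_sub, ← h2]
  ring

lemma JrecN' (m : ℕ) :
    C (((m:ℝ)+2) * ((m:ℝ)+2*α+2)) * derivative (Jpoly α (m+2))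
      = C ((2*(m:ℝ)+2*α+3) * ((m:ℝ)+α+2)) * (Jpoly α (m+1) + X * derivative (Jpoly α (m+1)))
        - C (((m:ℝ)+1+α) * ((m:ℝ)+2+α)) * derivative (Jpoly α m) := by
  have h := congrArg derivative (JrecN α hα m)
  simpa [derivative_mul, mul_add] using h


omit hα in
lemma jacobiP_even (m : ℕ) (x : ℝ) : jacobiP α m (-x) = (-1)^m * jacobiP α m x := by
  induction m using Nat.twoStepInduction generalizing x with
  | zero => simp [jacobiP]
  | one => simp [jacobiP]
  | more k ih1 ih2 =>
      simp only [jacobiP, ih1, ih2, pow_succ]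
      ring


lemma JderivId : ∀ m : ℕ, (1 - X^2) * derivative (Jpoly α (m+1))
    = C (-((m:ℝ)+1)) * X * Jpoly α (m+1) + C ((m:ℝ)+1+α) * Jpoly α m := by
  intro m
  have hm0 : (0:ℝ) ≤ (0:ℝ) := le_refl 0
  induction m using Nat.twoStepInduction with
  | zero =>
      simp only [Nat.cast_zero, Jpoly]
      simp [derivative_mul]
      ring
  | one =>
      have h1 := JrecN α hα 0
      have h1' := JrecN' α hα 0
      rw [show (0:ℕ)+2 = 2 from rfl, show (0:ℕ)+1 = 1 from rfl] at h1 h1'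
      rw [show (1:ℕ)+1 = 2 from rfl]
      rw [show Jpoly α 1 = C (α+1) * X from rfl, show Jpoly α 0 = 1 from rfl] at h1 h1'
      rw [show Jpoly α 1 = C (α+1) * X from rfl]
      have hA : (0:ℝ) < (((0:ℕ):ℝ)+2) * (((0:ℕ):ℝ)+2*α+2) := by norm_num; nlinarith
      apply mul_left_cancel₀ (C_pos_ne _ hA)
      simp only [Nat.cast_zero, Nat.cast_one, derivative_mul, derivative_C, derivative_X,
        derivative_one, zero_mul, mul_zero, mul_one, one_mul, zero_add, add_zero, sub_zero,
        map_mul, map_add, map_neg, map_ofNat, C_0, C_1] at h1 h1' ⊢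
      linear_combination (1-X^2) * h1' + 2*X*h1
  | more m ih1 ih2 =>
      have h1 := JrecN α hα m
      have h2 := JrecN α hα (m+1)
      have h2' := JrecN' α hα (m+1)
      rw [show m+1+2 = m+3 by omega, show m+1+1 = m+2 by omega] at h2 h2'
      rw [show m+2+1 = m+3 by omega]
      push_cast at h2 h2' ih2 ⊢
      have e1 : (0:ℝ) < ((m:ℝ)+1+α) := by have := Nat.cast_nonneg (α := ℝ) m; nlinarith
      have e2 : (0:ℝ) < ((m:ℝ)+2+α) := by have := Nat.cast_nonneg (α := ℝ) m; nlinarith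
      have e3 : (0:ℝ) < ((m:ℝ)+3) := by positivity
      have e4 : (0:ℝ) < ((m:ℝ)+2*α+3) := by have := Nat.cast_nonneg (α := ℝ) m; nlinarith
      apply mul_left_cancel₀ (C_pos_ne _ e3)
      apply mul_left_cancel₀ (C_pos_ne _ e4)
      apply mul_left_cancel₀ (C_pos_ne _ e1)
      apply mul_left_cancel₀ (C_pos_ne _ e2)
      simp only [map_mul, map_add, map_neg, map_ofNat, C_0, C_1] at h1 h2 h2' ih1 ih2 ⊢
      linear_combination
        ((C (m:ℝ)+1+C α)*(C (m:ℝ)+2+C α)*(1-X^2)) * h2'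
        + ((C (m:ℝ)+1+C α)*(C (m:ℝ)+2+C α)*(C (m:ℝ)+3)*X) * h2
        + ((C (m:ℝ)+1+C α)*(C (m:ℝ)+2+C α)*((2*C (m:ℝ)+2*C α+5)*(C (m:ℝ)+C α+3))*X) * ih2
        - ((C (m:ℝ)+1+C α)*(C (m:ℝ)+2+C α)*(C (m:ℝ)+2+C α)*(C (m:ℝ)+3+C α)) * ih1
        - ((C (m:ℝ)+2+C α)*(C (m:ℝ)+3+C α)*(C (m:ℝ)+1+C α)) * h1

lemma JodeP (m : ℕ) :
    (1 - X^2) * derivative (derivative (Jpoly α (m+2)))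
      - C (2*(α+1)) * X * derivative (Jpoly α (m+2))
      + C ((((m:ℝ)+2)) * (((m:ℝ)+2) + 2*α + 1)) * Jpoly α (m+2) = 0 := by
  have hW : ((1:Polynomial ℝ) - X^2) ≠ 0 := by
    intro h
    have := congrArg (eval 0) h
    simp at this
  apply mul_left_cancel₀ hW
  rw [mul_zero]
  have hS := JderivId α hα (m+1)
  rw [show m+1+1 = m+2 by omega] at hS
  push_cast at hS
  have hdS := congrArg derivative hS
  simp only [derivative_mul, derivative_add, derivative_sub, derivative_one, derivative_X_pow,
    derivative_X, derivative_C, zero_mul, mul_one, one_mul, zero_sub, map_neg, map_add,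
    Nat.cast_ofNat, pow_one, mul_zero, zero_add, add_zero] at hdS
  have hSM := JderivId α hα m
  have hRec := JrecN α hα m
  simp only [map_mul, map_add, map_neg, map_ofNat, C_0, C_1] at hS hdS hSM hRec ⊢
  linear_combination (1-X^2) * hdS + (-(C (m:ℝ)+2+2*C α))*X * hS + (C (m:ℝ)+2+C α) * hSM + hRec

lemma jacobiP_zero (k : ℕ) : jacobiP α (2*k) 0 ≠ 0 ∧ jacobiP α (2*k+1) 0 = 0 := by
  induction k with
  | zero => norm_num [jacobiP]
  | succ k ih =>
      obtain ⟨ih1, ih2⟩ := ih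
      have hg : 0 < jacobiG α (2*k+1) := jacobiG_pos α hα (2*k)
      have ha : 0 < jacobiA α (2*k+1) := jacobiA_pos α hα (2*k)
      have hg2 : 0 < jacobiG α (2*k+2) := jacobiG_pos α hα (2*k+1)
      have ha2 : 0 < jacobiA α (2*k+2) := jacobiA_pos α hα (2*k+1)
      rw [show 2*(k+1) = 2*k+2 by omega, show 2*k+2+1 = (2*k+1)+2 by omega]
      constructor
      · simp only [jacobiP, zero_mul, zero_sub]
        exact div_ne_zero (neg_ne_zero.mpr (mul_ne_zero hg.ne' ih1)) ha.ne'
      · simp only [jacobiP, zero_mul, zero_sub]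
        rw [show 2*k+1+1 = 2*k+2 from rfl, ih2]
        simp
end Poly

lemma hnum_aux (α nn e c K t : ℝ) (hα : -1/2 ≤ α) (hn3 : 3 ≤ nn)
    (hedef : e = (α+1)/2) (hcdef : c = 2*nn*(2*nn+2*α+1))
    (hKdef : K = (α+1/2+nn)*(nn+2)) (hKt : K * t^2 < 10/16) :
    0 < 4*e*(e-1)*t^2 - (2*e + c) * (1-t^2) + 4*K*(1-t^2)^2 := by
  have hL : 3 ≤ α + 1/2 + nn := by linarith
  have hK : (15:ℝ) ≤ K := by rw [hKdef]; nlinarith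
  have h24 : t^2 < 1/24 := by nlinarith [sq_nonneg t, hKt, hK]
  have hc4 : c = 4*nn*(α+1/2+nn) := by rw [hcdef]; ring
  have hLpos : (0:ℝ) < α+1/2+nn := by linarith
  have hKt' : (α+1/2+nn) * ((nn+2)*t^2) < 10/16 := by
    rw [hKdef] at hKt; linarith [hKt]
  have hs0 : (0:ℝ) ≤ (nn+2)*t^2 := by nlinarith [sq_nonneg t]
  have hmt : (nn+2)*t^2 < 10/48 := by nlinarith [hKt', hL, hs0]
  have hterm : 4*K*(1-t^2)^2 - c*(1-t^2)
      = 4*(α+1/2+nn)*((1-t^2)*(2-(nn+2)*t^2)) := by rw [hKdef, hc4]; ring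
  have h23 : (23:ℝ)/24 < 1 - t^2 := by linarith
  have h86 : (86:ℝ)/48 < 2 - (nn+2)*t^2 := by linarith
  have h2e : 2*e ≤ (α+1/2+nn) - 5/2 := by rw [hedef]; linarith
  have p1 : (23:ℝ)/24*(86/48) < (1-t^2)*(2-(nn+2)*t^2) := by
    nlinarith [mul_pos (sub_pos.mpr h23) (sub_pos.mpr h86), h23, h86]
  have p4 : (α+1/2+nn) * ((23:ℝ)/24*(86/48)) ≤ (α+1/2+nn) * ((1-t^2)*(2-(nn+2)*t^2)) :=
    mul_le_mul_of_nonneg_left p1.le (by linarith)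
  have he0 : (0:ℝ) ≤ e := by rw [hedef]; linarith
  have hsmall : -(13/6)*e ≤ 4*e*(e-1)*t^2 - 2*e*(1-t^2) := by
    nlinarith [sq_nonneg (e*t), mul_le_mul_of_nonneg_left h24.le he0, he0, sq_nonneg t]
  nlinarith [hterm, p4, hsmall, h2e, hL]

set_option maxHeartbeats 4000000 in
theorem jacobi_first_positive_zero_lower_bound (n : ℕ) (hn : 3 ≤ n) (α : ℝ)
    (hα : -1/2 ≤ α) (x : ℝ)
    (hx : IsLeast {y : ℝ | 0 < y ∧ jacobiP α (2 * n) y = 0} x) :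
    x ≥ π / (4 * Real.sqrt ((α + 1/2 + n) * ((n : ℝ) + 2))) := by
  obtain ⟨⟨hx0, hPxzero⟩, hlb⟩ := hx
  by_contra hcon
  push_neg at hcon
  have hn3 : (3:ℝ) ≤ (n:ℝ) := by exact_mod_cast hn
  have hL : 3 ≤ α + 1/2 + (n:ℝ) := by linarith
  set K : ℝ := (α + 1/2 + (n:ℝ)) * ((n:ℝ)+2) with hKdef
  have hK : (15:ℝ) ≤ K := by rw [hKdef]; nlinarith
  have hKpos : (0:ℝ) < K := by linarith
  have hsqKpos : 0 < Real.sqrt K := Real.sqrt_pos.mpr hKpos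
  have hsqKsq : Real.sqrt K ^ 2 = K := Real.sq_sqrt hKpos.le
  have h38 : (3.8:ℝ) ≤ Real.sqrt K := by
    nlinarith [hsqKsq, hsqKpos]
  set b : ℝ := π / (4 * Real.sqrt K) with hbdef
  have hxb : x < b := hcon
  have hπ : π < 3.15 := pi_lt_d2
  have hπ0 : 0 < π := pi_pos
  have hπ2 : π^2 < 10 := by nlinarith
  have hbpos : 0 < b := by rw [hbdef]; positivity
  have hb021 : b < 0.21 := by
    rw [hbdef, div_lt_iff₀ (by positivity)]
    nlinarith
  have hx021 : x < 0.21 := lt_trans hxb hb021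
  have hb2 : b^2 = π^2 / (16*K) := by
    rw [hbdef]
    rw [div_pow]
    congr 1
    rw [mul_pow]
    rw [hsqKsq]
    norm_num
  set θ : ℝ := 2 * Real.sqrt K with hθdef
  have hθpos : 0 < θ := by positivity
  have hθsq : θ^2 = 4*K := by rw [hθdef, mul_pow, hsqKsq]; norm_num
  have hθb : θ * b = π/2 := by
    rw [hθdef, hbdef]
    field_simp
    ring
  -- the polynomial and its derivatives
  set p : Polynomial ℝ := Jpoly α (2*n) with hpdef
  set P : ℝ → ℝ := fun t => p.eval t with hPdef
  set P1 : ℝ → ℝ := fun t => (derivative p).eval t with hP1def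
  set P2 : ℝ → ℝ := fun t => (derivative (derivative p)).eval t with hP2def
  have hPfun : jacobiP α (2*n) = P := funext fun t => jacobiP_eval α (2*n) t
  have hPx : P x = 0 := by rw [← hPfun]; exact hPxzero
  have hPd : ∀ t : ℝ, HasDerivAt P (P1 t) t := fun t => p.hasDerivAt t
  have hP1d : ∀ t : ℝ, HasDerivAt P1 (P2 t) t := fun t => (derivative p).hasDerivAt t
  set c : ℝ := (2*(n:ℝ)) * (2*(n:ℝ) + 2*α + 1) with hcdef
  have hODE : ∀ t : ℝ, (1 - t^2) * P2 t - 2*(α+1)*t*P1 t + c * P t = 0 := by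
    intro t
    obtain ⟨m, hm⟩ : ∃ m, 2*n = m + 2 := ⟨2*n - 2, by omega⟩
    have hmr : ((m:ℝ)) + 2 = 2*(n:ℝ) := by
      have : ((m+2 : ℕ):ℝ) = ((2*n : ℕ):ℝ) := by rw [← hm]
      push_cast at this
      linarith
    have h := congrArg (eval t) (JodeP α hα m)
    rw [← hm] at h
    simp only [eval_add, eval_sub, eval_mul, eval_pow, eval_X, eval_C, eval_one, eval_zero] at h
    rw [← hpdef] at h
    rw [hcdef, ← hmr]
    exact h
  -- sign of P on (-x, x)
  have hP0ne : P 0 ≠ 0 := by rw [← hPfun]; exact (jacobiP_zero α hα n).1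
  have hPeven : ∀ t, P (-t) = P t := by
    intro t
    have h := jacobiP_even α (2*n) t
    rw [hPfun] at h
    rw [h, Even.neg_one_pow (even_two_mul n), one_mul]
  set σ : ℝ := if 0 < P 0 then 1 else -1 with hσdef
  have hσP0 : 0 < σ * P 0 := by
    rcases hP0ne.lt_or_gt with h|h
    · rw [hσdef, if_neg (by linarith)]; linarith
    · rw [hσdef, if_pos h]; linarith
  have hnz : ∀ z, -x < z → z < x → P z ≠ 0 := by
    intro z h1 h2 hz
    rcases lt_trichotomy z 0 with h|h|h
    · have hmz : P (-z) = 0 := by rw [hPeven]; exact hz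
      have hmem : (0:ℝ) < -z := by linarith
      have := hlb ⟨hmem, by rw [hPfun]; exact hmz⟩
      linarith
    · exact hP0ne (h ▸ hz)
    · have := hlb ⟨h, show jacobiP α (2*n) z = 0 by rw [hPfun]; exact hz⟩
      linarith
  have hPcont : Continuous P := by
    rw [hPdef]; exact p.continuous
  have hsign : ∀ t, -x < t → t < x → 0 < σ * P t := by
    intro t h1 h2
    rcases lt_trichotomy (σ * P t) 0 with hneg|hzero|hpos
    · exfalso
      have hcontσ : Continuous fun s => σ * P s := continuous_const.mul hPcont
      rcases lt_trichotomy t 0 with ht|ht|ht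
      · have hsub : Ioo ((fun s => σ * P s) t) ((fun s => σ * P s) 0) ⊆ (fun s => σ * P s) '' Ioo t 0 :=
          intermediate_value_Ioo (le_of_lt ht) hcontσ.continuousOn
        obtain ⟨z, hz, hz0⟩ := hsub ⟨hneg, hσP0⟩
        have hPz : P z = 0 := by
          have hσne : σ ≠ 0 := by rw [hσdef]; split <;> norm_num
          have h0 : σ * P z = 0 := by simpa using hz0
          rcases mul_eq_zero.mp h0 with h|h
          · exact absurd h hσne
          · exact h
        exact hnz z (by linarith [hz.1]) (by linarith [hz.2]) hPz
      · rw [ht] at hneg; linarith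
      · have hsub : Ioo ((fun s => σ * P s) t) ((fun s => σ * P s) 0) ⊆ (fun s => σ * P s) '' Ioo 0 t :=
          intermediate_value_Ioo' (le_of_lt ht) hcontσ.continuousOn
        obtain ⟨z, hz, hz0⟩ := hsub ⟨hneg, hσP0⟩
        have hPz : P z = 0 := by
          have hσne : σ ≠ 0 := by rw [hσdef]; split <;> norm_num
          have h0 : σ * P z = 0 := by simpa using hz0
          rcases mul_eq_zero.mp h0 with h|h
          · exact absurd h hσne
          · exact h
        exact hnz z (by linarith [hz.1]) (by linarith [hz.2]) hPz
    · exfalso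
      have hσne : σ ≠ 0 := by rw [hσdef]; split <;> norm_num
      have : P t = 0 := by
        rcases mul_eq_zero.mp hzero with h|h
        · exact absurd h hσne
        · exact h
      exact hnz t h1 h2 this
    · exact hpos
  -- the transformed function u and its derivatives
  set e : ℝ := (α+1)/2 with hedef
  have he14 : (1/4:ℝ) ≤ e := by rw [hedef]; linarith
  have he2 : α + 1 = 2*e := by rw [hedef]; ring
  set A : ℝ → ℝ := fun t => 1 - t^2 with hAdef
  have hApos : ∀ t : ℝ, t^2 < 1 → 0 < A t := by
    intro t h; simp only [hAdef]; linarith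
  have hAd : ∀ t : ℝ, HasDerivAt A (-(2*t)) t := by
    intro t
    have h := (hasDerivAt_pow 2 t).const_sub 1
    simpa using h
  set u : ℝ → ℝ := fun t => σ * (A t ^ e * P t) with hudef
  set u1 : ℝ → ℝ := fun t => σ * (e * A t ^ (e-1) * (-(2*t)) * P t + A t ^ e * P1 t) with hu1def
  set u2 : ℝ → ℝ := fun t => σ * ((-(2*e)) * A t ^ (e-1) * P t
      + (4*e*(e-1)*t^2) * A t ^ (e-2) * P t
      + (-(4*e*t)) * A t ^ (e-1) * P1 t + A t ^ e * P2 t) with hu2def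
  have hrpow : ∀ (r : ℝ) (t : ℝ), t^2 < 1 →
      HasDerivAt (fun s => A s ^ r) (r * A t ^ (r-1) * (-(2*t))) t := by
    intro r t ht
    exact (Real.hasDerivAt_rpow_const (Or.inl (hApos t ht).ne')).comp t (hAd t)
  have hud : ∀ t : ℝ, t^2 < 1 → HasDerivAt u (u1 t) t := by
    intro t ht
    exact ((hrpow e t ht).mul (hPd t)).const_mul σ
  have hu1d : ∀ t : ℝ, t^2 < 1 → HasDerivAt u1 (u2 t) t := by
    intro t ht
    have hneg2 : HasDerivAt (fun s : ℝ => -(2*s)) (-(2*1)) t := ((hasDerivAt_id t).const_mul 2).neg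
    have hW1 : HasDerivAt (fun s => e * A s ^ (e-1) * (-(2*s)))
        ((e * ((e-1) * A t ^ (e-1-1) * (-(2*t)))) * (-(2*t)) + e * A t ^ (e-1) * (-(2*1))) t :=
      (((hrpow (e-1) t ht).const_mul e).mul hneg2)
    have H := (((hW1.mul (hPd t)).add ((hrpow e t ht).mul (hP1d t))).const_mul σ)
    refine H.congr_deriv ?_
    simp only [hu2def]
    rw [show e-1-1 = e-2 by ring]
    ring
  clear hlb hPxzero hPfun hcon hpdef hPdef hP1def hP2def
  clear_value σ e A u u1 u2 P P1 P2 p c K b θ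
  -- key identity from the ODE
  have hkey : ∀ t : ℝ, t^2 < 1 → (A t)^2 * u2 t
      = (4*e*(e-1)*t^2 - (2*e + c) * A t) * u t := by
    intro t ht
    have hA := hApos t ht
    have hAt : A t = 1 - t^2 := by rw [hAdef]
    have h1 : A t ^ (e-1) = A t ^ e / A t := by
      rw [Real.rpow_sub hA, Real.rpow_one]
    have h2 : A t ^ (e-2) = A t ^ e / (A t)^2 := by
      rw [Real.rpow_sub hA]
      congr 1
      rw [show (2:ℝ) = ((2:ℕ):ℝ) by norm_num, Real.rpow_natCast]
    have hode : A t * P2 t = 4*e*t*P1 t - c * P t := by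
      have h := hODE t
      rw [← hAt] at h
      linear_combination h + (2*t*P1 t) * he2
    simp only [hu2def, hudef, h1, h2]
    field_simp
    linear_combination (σ * A t) * hode
  have hx21 : x^2 < 1 := by nlinarith
  have hupos : ∀ t : ℝ, -x < t → t < x → 0 < u t := by
    intro t h1 h2
    have ht1 : t^2 < 1 := by nlinarith [sq_lt_sq' h1 h2]
    have hσp := hsign t h1 h2
    have hrp := Real.rpow_pos_of_pos (hApos t ht1) e
    simp only [hudef]
    nlinarith
  -- the numeric inequality
  have hnum : ∀ t : ℝ, -x < t → t < x →
      0 < 4*e*(e-1)*t^2 - (2*e + c) * A t + 4*K*(A t)^2 := by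
    intro t h1 h2
    have hAt : A t = 1 - t^2 := by rw [hAdef]
    have htb : t^2 < b^2 := by nlinarith [sq_lt_sq' h1 h2]
    have hKb2 : K * b^2 = π^2/16 := by rw [hb2]; field_simp
    have hKt : K * t^2 < 10/16 := by
      have h := mul_lt_mul_of_pos_left htb hKpos
      linarith
    rw [hAt]
    exact hnum_aux α (n:ℝ) e c K t hα hn3 hedef hcdef hKdef hKt
  -- the comparison functions
  set v : ℝ → ℝ := fun t => Real.cos (θ * t) with hvdef
  set v1 : ℝ → ℝ := fun t => -Real.sin (θ * t) * θ with hv1def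
  have hθt : ∀ t : ℝ, HasDerivAt (fun s : ℝ => θ * s) θ t := by
    intro t
    simpa using (hasDerivAt_id t).const_mul θ
  have hvd : ∀ t : ℝ, HasDerivAt v (v1 t) t := fun t => (hθt t).cos
  have hv1d : ∀ t : ℝ, HasDerivAt v1 (-(θ^2) * v t) t := by
    intro t
    have h := ((hθt t).sin.neg).mul_const θ
    refine h.congr_deriv ?_
    simp only [hvdef]
    ring
  have hvpos : ∀ t : ℝ, -x ≤ t → t ≤ x → 0 < v t := by
    intro t h1 h2
    have ha : θ * t < π/2 := by
      have h3 := mul_lt_mul_of_pos_left hxb hθpos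
      have h4 := mul_le_mul_of_nonneg_left h2 hθpos.le
      linarith
    have hb' : -(π/2) < θ * t := by
      have h3 := mul_lt_mul_of_pos_left hxb hθpos
      have h4 := mul_le_mul_of_nonneg_left h1 hθpos.le
      linarith
    simp only [hvdef]
    exact Real.cos_pos_of_mem_Ioo ⟨hb', ha⟩
  set G : ℝ → ℝ := fun t => u1 t * v t - u t * v1 t with hGdef
  have hGd : ∀ t : ℝ, t^2 < 1 → HasDerivAt G (u2 t * v t + θ^2 * (u t * v t)) t := by
    intro t ht
    have h := ((hu1d t ht).mul (hvd t)).sub ((hud t ht).mul (hv1d t))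
    refine h.congr_deriv ?_
    ring
  have hGpos : ∀ t : ℝ, -x < t → t < x → 0 < u2 t * v t + θ^2 * (u t * v t) := by
    intro t h1 h2
    have ht1 : t^2 < 1 := by nlinarith [sq_lt_sq' h1 h2]
    have hA := hApos t ht1
    have hu_pos := hupos t h1 h2
    have hvp := hvpos t h1.le h2.le
    have hn' := hnum t h1 h2
    have hq : (A t)^2 * (u2 t + θ^2 * u t)
        = (4*e*(e-1)*t^2 - (2*e + c) * A t + 4*K*(A t)^2) * u t := by
      rw [hθsq]
      linear_combination hkey t ht1
    have h3 : 0 < (A t)^2 * (u2 t + θ^2 * u t) := by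
      rw [hq]; exact mul_pos hn' hu_pos
    have h4 : 0 < u2 t + θ^2 * u t := by
      by_contra h
      push_neg at h
      nlinarith [mul_nonpos_of_nonneg_of_nonpos (sq_nonneg (A t)) h]
    have h5 : u2 t * v t + θ^2 * (u t * v t) = (u2 t + θ^2 * u t) * v t := by ring
    rw [h5]
    exact mul_pos h4 hvp
  -- endpoint values
  have hux : u x = 0 := by simp only [hudef]; rw [hPx]; ring
  have hunx : u (-x) = 0 := by simp only [hudef]; rw [hPeven, hPx]; ring
  have hu1x : u1 x ≤ 0 := by
    have htend : Filter.Tendsto (slope u x) (nhdsWithin x (Set.Iio x)) (nhds (u1 x)) :=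
      (hasDerivAt_iff_tendsto_slope.mp (hud x hx21)).mono_left
        (nhdsWithin_mono x (fun y hy => ne_of_lt hy))
    refine le_of_tendsto htend ?_
    have hIoo : Set.Ioo (-x) x ∈ nhdsWithin x (Set.Iio x) :=
      Ioo_mem_nhdsLT_of_mem ⟨by linarith, le_refl x⟩
    filter_upwards [hIoo] with t ht
    rw [slope_def_field, hux, sub_zero]
    exact div_nonpos_of_nonneg_of_nonpos (hupos t ht.1 ht.2).le (by linarith [ht.2])
  have hu1nx : 0 ≤ u1 (-x) := by
    have hx21' : (-x)^2 < 1 := by nlinarith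
    have htend : Filter.Tendsto (slope u (-x)) (nhdsWithin (-x) (Set.Ioi (-x))) (nhds (u1 (-x))) :=
      (hasDerivAt_iff_tendsto_slope.mp (hud (-x) hx21')).mono_left
        (nhdsWithin_mono (-x) (fun y hy => ne_of_gt hy))
    refine ge_of_tendsto htend ?_
    have hIoo : Set.Ioo (-x) x ∈ nhdsWithin (-x) (Set.Ioi (-x)) :=
      Ioo_mem_nhdsGT_of_mem ⟨le_refl (-x), by linarith⟩
    filter_upwards [hIoo] with t ht
    rw [slope_def_field, hunx, sub_zero]
    exact div_nonneg (hupos t ht.1 ht.2).le (by linarith [ht.1])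
  -- strict monotonicity of the Wronskian
  have hGmono : StrictMonoOn G (Set.Icc (-x) x) := by
    apply strictMonoOn_of_deriv_pos (convex_Icc _ _)
    · intro t ht
      have ht1 : t^2 < 1 := by nlinarith [sq_le_sq' ht.1 ht.2]
      exact ((hGd t ht1).continuousAt).continuousWithinAt
    · intro t ht
      rw [interior_Icc] at ht
      have ht1 : t^2 < 1 := by nlinarith [sq_lt_sq' ht.1 ht.2]
      rw [(hGd t ht1).deriv]
      exact hGpos t ht.1 ht.2
  have hGlt : G (-x) < G x :=
    hGmono ⟨le_refl (-x), by linarith⟩ ⟨by linarith, le_refl x⟩ (by linarith)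
  have hGnegx : 0 ≤ G (-x) := by
    simp only [hGdef]
    rw [hunx]
    have := mul_nonneg hu1nx (hvpos (-x) (le_refl (-x)) (by linarith)).le
    linarith
  have hGx : G x ≤ 0 := by
    simp only [hGdef]
    rw [hux]
    have := mul_nonpos_of_nonpos_of_nonneg hu1x (hvpos x (by linarith) (le_refl x)).le
    linarith
  linarith
end

section
/- Let P be a homogeneous polynomial of even degree 2k > 0 in d variables, and suppose that for each m there exists C_{2m} > 0 such that ⟨P·f, f⟩_{L²(S^{d−1})} ≥ C_{2m}·⟨f, f⟩_{L²(S^{d−1})} for all homogeneous polynomials f of degree 2m. Then for all homogeneous polynomials g of odd degree 2m+1, ⟨P·g, g⟩_{L²(S^{d−1})} ≥ C_{2m+2}·⟨g, g⟩_{L²(S^{d−1})}. -/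
open MeasureTheory MvPolynomial

theorem even_to_odd_degree_estimate (d : ℕ) (hd : 2 ≤ d)
    (P : MvPolynomial (Fin d) ℝ) (k : ℕ) (hk : 0 < k) (hP : P.IsHomogeneous (2 * k))
    (C : ℕ → ℝ) (hC : ∀ m : ℕ, 0 < C m)
    (hineq : ∀ m : ℕ, ∀ f : MvPolynomial (Fin d) ℂ, f.IsHomogeneous (2 * m) →
      (∫ θ : Metric.sphere (0 : EuclideanSpace ℝ (Fin d)) 1,
          MvPolynomial.eval (fun i => (θ : EuclideanSpace ℝ (Fin d)) i) P *
            ‖MvPolynomial.eval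
              (fun i => ((θ : EuclideanSpace ℝ (Fin d)) i : ℂ)) f‖ ^ 2
          ∂((volume : Measure (EuclideanSpace ℝ (Fin d))).toSphere)) ≥
        C m *
          ∫ θ : Metric.sphere (0 : EuclideanSpace ℝ (Fin d)) 1,
            ‖MvPolynomial.eval
              (fun i => ((θ : EuclideanSpace ℝ (Fin d)) i : ℂ)) f‖ ^ 2
            ∂((volume : Measure (EuclideanSpace ℝ (Fin d))).toSphere)) :
    ∀ m : ℕ, ∀ g : MvPolynomial (Fin d) ℂ, g.IsHomogeneous (2 * m + 1) →
      (∫ θ : Metric.sphere (0 : EuclideanSpace ℝ (Fin d)) 1,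
          MvPolynomial.eval (fun i => (θ : EuclideanSpace ℝ (Fin d)) i) P *
            ‖MvPolynomial.eval
              (fun i => ((θ : EuclideanSpace ℝ (Fin d)) i : ℂ)) g‖ ^ 2
          ∂((volume : Measure (EuclideanSpace ℝ (Fin d))).toSphere)) ≥
        C (m + 1) *
          ∫ θ : Metric.sphere (0 : EuclideanSpace ℝ (Fin d)) 1,
            ‖MvPolynomial.eval
              (fun i => ((θ : EuclideanSpace ℝ (Fin d)) i : ℂ)) g‖ ^ 2
            ∂((volume : Measure (EuclideanSpace ℝ (Fin d))).toSphere) := by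
  intro m g hg
  set E := EuclideanSpace ℝ (Fin d)
  set μ := (volume : Measure E).toSphere
  -- coordinates sum of squares = 1 on the sphere
  have hsum : ∀ θ : Metric.sphere (0 : E) 1, ∑ j : Fin d, ((θ : E) j) ^ 2 = 1 := by
    intro θ
    have hn : ‖(θ : E)‖ = 1 := by
      have := θ.2
      simpa [Metric.mem_sphere, dist_eq_norm] using this
    have h2 : ‖(θ : E)‖ ^ 2 = ∑ j : Fin d, ((θ : E) j) ^ 2 := by
      rw [EuclideanSpace.norm_eq]
      rw [Real.sq_sqrt (by positivity)]
      simp [sq_abs]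
    rw [← h2, hn, one_pow]
  -- continuity of evaluations
  have hcoord : Continuous fun θ : Metric.sphere (0 : E) 1 => fun i => ((θ : E) i : ℂ) := by
    refine continuous_pi fun i => ?_
    exact Complex.continuous_ofReal.comp ((continuous_apply i).comp
      ((PiLp.continuous_ofLp 2 fun _ : Fin d => ℝ).comp continuous_subtype_val))
  have hcoordR : Continuous fun θ : Metric.sphere (0 : E) 1 => fun i => ((θ : E) i) := by
    refine continuous_pi fun i => ?_
    exact (continuous_apply i).comp
      ((PiLp.continuous_ofLp 2 fun _ : Fin d => ℝ).comp continuous_subtype_val)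
  have hcont : ∀ q : MvPolynomial (Fin d) ℂ,
      Continuous fun θ : Metric.sphere (0 : E) 1 =>
        ‖MvPolynomial.eval (fun i => ((θ : E) i : ℂ)) q‖ ^ 2 := fun q =>
    (continuous_norm.comp ((MvPolynomial.continuous_eval q).comp hcoord)).pow 2
  have hcontP : Continuous fun θ : Metric.sphere (0 : E) 1 =>
      MvPolynomial.eval (fun i => ((θ : E) i)) P :=
    (MvPolynomial.continuous_eval P).comp hcoordR
  have hint : ∀ f : Metric.sphere (0 : E) 1 → ℝ, Continuous f → Integrable f μ := by
    intro f hf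
    exact hf.integrable_of_hasCompactSupport (HasCompactSupport.of_compactSpace f)
  -- pointwise identities
  have key : ∀ θ : Metric.sphere (0 : E) 1,
      ∑ j : Fin d, ‖MvPolynomial.eval (fun i => ((θ : E) i : ℂ)) (X j * g)‖ ^ 2
        = ‖MvPolynomial.eval (fun i => ((θ : E) i : ℂ)) g‖ ^ 2 := by
    intro θ
    have : ∀ j : Fin d,
        ‖MvPolynomial.eval (fun i => ((θ : E) i : ℂ)) (X j * g)‖ ^ 2
          = ((θ : E) j) ^ 2 * ‖MvPolynomial.eval (fun i => ((θ : E) i : ℂ)) g‖ ^ 2 := by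
      intro j
      rw [map_mul, norm_mul, eval_X, Complex.norm_real, Real.norm_eq_abs, mul_pow, sq_abs]
    rw [Finset.sum_congr rfl fun j _ => this j, ← Finset.sum_mul, hsum θ, one_mul]
  -- each X j * g is homogeneous of degree 2(m+1)
  have hfj : ∀ j : Fin d, (X j * g : MvPolynomial (Fin d) ℂ).IsHomogeneous (2 * (m + 1)) := by
    intro j
    have : (1 : ℕ) + (2 * m + 1) = 2 * (m + 1) := by ring
    exact this ▸ (isHomogeneous_X ℂ j).mul hg
  -- rewrite left integral as sum over j
  have hL : (∫ θ : Metric.sphere (0 : E) 1,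
      MvPolynomial.eval (fun i => ((θ : E) i)) P *
        ‖MvPolynomial.eval (fun i => ((θ : E) i : ℂ)) g‖ ^ 2 ∂μ)
      = ∑ j : Fin d, ∫ θ : Metric.sphere (0 : E) 1,
          MvPolynomial.eval (fun i => ((θ : E) i)) P *
            ‖MvPolynomial.eval (fun i => ((θ : E) i : ℂ)) (X j * g)‖ ^ 2 ∂μ := by
    rw [← integral_finset_sum _ fun j _ => hint (fun θ => _ * _) (hcontP.mul (hcont (X j * g)))]
    congr 1
    funext θ
    rw [← Finset.mul_sum, key θ]
  have hR : (∫ θ : Metric.sphere (0 : E) 1,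
      ‖MvPolynomial.eval (fun i => ((θ : E) i : ℂ)) g‖ ^ 2 ∂μ)
      = ∑ j : Fin d, ∫ θ : Metric.sphere (0 : E) 1,
          ‖MvPolynomial.eval (fun i => ((θ : E) i : ℂ)) (X j * g)‖ ^ 2 ∂μ := by
    rw [← integral_finset_sum _ fun j _ => hint _ (hcont (X j * g))]
    congr 1
    funext θ
    rw [key θ]
  rw [hL, hR, Finset.mul_sum]
  exact Finset.sum_le_sum fun j _ => hineq (m + 1) (X j * g) (hfj j)
end
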